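/- arXiv:2110.08991 — 3 statements merged into one kernel-verified Lean document; each statement's English description precedes it below -/
import Mathlib

section
/- Let x and y_1, ..., y_r be non-negative real numbers, ε > 0, and p ≥ 1. Then (x + Σ_{i=1}^r y_i)^p ≤ (1+ε)^(p-1) · x^p + ((1+ε)·r/ε)^(p-1) · Σ_{i=1}^r y_i^p. -/
open Real Finset

lemma mmr_two_term (a b ε p : ℝ) (ha : 0 ≤ a) (hb : 0 ≤ b) (hε : 0 < ε) (hp : 1 ≤ p) :
    (a + b) ^ p ≤ (1 + ε) ^ (p - 1) * a ^ p + ((1 + ε) / ε) ^ (p - 1) * b ^ p := by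
  have h1ε : (0:ℝ) < 1 + ε := by linarith
  have key := Real.rpow_arith_mean_le_arith_mean_rpow Finset.univ
      ![1 / (1 + ε), ε / (1 + ε)] ![(1 + ε) * a, (1 + ε) / ε * b]
      (by
        intro i _
        fin_cases i <;> simp <;> positivity)
      (by
        simp [Fin.sum_univ_two]
        field_simp)
      (by
        intro i _
        fin_cases i <;> simp <;> positivity)
      hp
  simp only [Fin.sum_univ_two, Matrix.cons_val_zero, Matrix.cons_val_one, Matrix.head_cons] at key
  have e1 : 1 / (1 + ε) * ((1 + ε) * a) + ε / (1 + ε) * ((1 + ε) / ε * b) = a + b := by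
    field_simp
  rw [e1] at key
  have e2 : 1 / (1 + ε) * ((1 + ε) * a) ^ p = (1 + ε) ^ (p - 1) * a ^ p := by
    rw [Real.mul_rpow h1ε.le ha, Real.rpow_sub h1ε, Real.rpow_one]
    ring
  have e3 : ε / (1 + ε) * ((1 + ε) / ε * b) ^ p = ((1 + ε) / ε) ^ (p - 1) * b ^ p := by
    rw [Real.mul_rpow (by positivity) hb, Real.rpow_sub (by positivity), Real.rpow_one]
    field_simp
  rw [e2, e3] at key
  exact key

lemma mmr_sum_pow (r : ℕ) (y : Fin r → ℝ) (p : ℝ) (hy : ∀ i, 0 ≤ y i) (hp : 1 ≤ p) :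
    (∑ i, y i) ^ p ≤ (r : ℝ) ^ (p - 1) * ∑ i, y i ^ p := by
  rcases Nat.eq_zero_or_pos r with hr | hr
  · subst hr
    simp [Real.zero_rpow (by linarith : p ≠ 0)]
  · have hr' : (0:ℝ) < r := by exact_mod_cast hr
    have key := Real.rpow_arith_mean_le_arith_mean_rpow Finset.univ
        (fun _ : Fin r => 1 / (r : ℝ)) (fun i => (r : ℝ) * y i)
        (fun i _ => by positivity)
        (by simp [Finset.sum_const, Finset.card_univ]; field_simp)
        (fun i _ => by have := hy i; positivity) hp
    have e1 : ∑ i, (1 / (r : ℝ)) * ((r : ℝ) * y i) = ∑ i, y i := by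
      apply Finset.sum_congr rfl
      intro i _
      field_simp
    have e2 : ∑ i, (1 / (r : ℝ)) * ((r : ℝ) * y i) ^ p
        = (r : ℝ) ^ (p - 1) * ∑ i, y i ^ p := by
      rw [Finset.mul_sum]
      apply Finset.sum_congr rfl
      intro i _
      rw [Real.mul_rpow hr'.le (hy i), Real.rpow_sub hr', Real.rpow_one]
      field_simp
    rw [e1, e2] at key
    exact key

theorem mmr_lemma_A1 (r : ℕ) (x : ℝ) (y : Fin r → ℝ) (ε p : ℝ)
    (hx : 0 ≤ x) (hy : ∀ i, 0 ≤ y i) (hε : 0 < ε) (hp : 1 ≤ p) :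
    (x + ∑ i, y i) ^ p ≤
      (1 + ε) ^ (p - 1) * x ^ p + ((1 + ε) * r / ε) ^ (p - 1) * ∑ i, y i ^ p := by
  have hS : 0 ≤ ∑ i, y i := Finset.sum_nonneg fun i _ => hy i
  have h1 := mmr_two_term x (∑ i, y i) ε p hx hS hε hp
  have h2 := mmr_sum_pow r y p hy hp
  have hmul : ((1 + ε) / ε) ^ (p - 1) * ((r : ℝ) ^ (p - 1) * ∑ i, y i ^ p)
      = ((1 + ε) * r / ε) ^ (p - 1) * ∑ i, y i ^ p := by
    rw [← mul_assoc, ← Real.mul_rpow (by positivity) (by positivity)]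
    ring_nf
  calc (x + ∑ i, y i) ^ p
      ≤ (1 + ε) ^ (p - 1) * x ^ p + ((1 + ε) / ε) ^ (p - 1) * (∑ i, y i) ^ p := h1
    _ ≤ (1 + ε) ^ (p - 1) * x ^ p + ((1 + ε) / ε) ^ (p - 1) * ((r : ℝ) ^ (p - 1) * ∑ i, y i ^ p) := by
        exact add_le_add_right (mul_le_mul_of_nonneg_left h2 (by positivity)) _
    _ = (1 + ε) ^ (p - 1) * x ^ p + ((1 + ε) * r / ε) ^ (p - 1) * ∑ i, y i ^ p := by
        rw [hmul]
end

section
/- Let X be a finite set of points in ℝ^d with positive weights, let π : ℝ^d → ℝ^m be a map, and suppose that for all x, y ∈ X, (1−ε)·‖x−y‖ ≤ ‖π(x)−π(y)‖ ≤ (1+ε)·‖x−y‖ for some 0 < ε < 1. Let cost(X) = min_{c∈ℝ^d} Σ_{x∈X} w(x)·‖x−c‖² and cost(π(X)) = min_{c∈ℝ^m} Σ_{x∈X} w(x)·‖π(x)−c‖². Then cost(π(X)) ≤ (1+ε)²·cost(X). -/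
open Finset

section Aux

variable {E : Type*} [NormedAddCommGroup E] [InnerProductSpace ℝ E]
variable {ι : Type*}

lemma aux_center_zero (X : Finset ι) (w : ι → ℝ) (f : ι → E)
    (W : ℝ) (hW : W = ∑ i ∈ X, w i) (hW0 : W ≠ 0) :
    ∑ i ∈ X, w i • (f i - W⁻¹ • ∑ j ∈ X, w j • f j) = 0 := by
  simp only [smul_sub, Finset.sum_sub_distrib]
  rw [← Finset.sum_smul, ← hW, smul_smul, mul_inv_cancel₀ hW0, one_smul, sub_self]

lemma aux_key1 (X : Finset ι) (w : ι → ℝ) (f : ι → E)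
    (W : ℝ) (hW : W = ∑ i ∈ X, w i) (hW0 : W ≠ 0)
    (μ : E) (hμ : μ = W⁻¹ • ∑ j ∈ X, w j • f j) (c : E) :
    ∑ i ∈ X, w i * ‖f i - c‖ ^ 2
      = ∑ i ∈ X, w i * ‖f i - μ‖ ^ 2 + W * ‖μ - c‖ ^ 2 := by
  have hzero : ∑ i ∈ X, w i • (f i - μ) = 0 := by
    rw [hμ]; exact aux_center_zero X w f W hW hW0
  have hexp : ∀ i ∈ X, w i * ‖f i - c‖ ^ 2
      = w i * ‖f i - μ‖ ^ 2 + 2 * (w i * inner ℝ (f i - μ) (μ - c)) + w i * ‖μ - c‖ ^ 2 := by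
    intro i _
    have h : f i - c = (f i - μ) + (μ - c) := by abel
    rw [h, @norm_add_sq_real]; ring
  rw [Finset.sum_congr rfl hexp]
  rw [Finset.sum_add_distrib, Finset.sum_add_distrib, ← Finset.mul_sum,
    ← Finset.sum_mul, ← hW]
  have hmid : ∑ i ∈ X, w i * inner ℝ (f i - μ) (μ - c) = (0 : ℝ) := by
    have h := sum_inner (𝕜 := ℝ) (s := X) (f := fun i => w i • (f i - μ)) (x := μ - c)
    simp only [real_inner_smul_left] at h
    rw [← h, hzero, inner_zero_left]
  rw [hmid]
  ring

lemma aux_key2 (X : Finset ι) (w : ι → ℝ) (f : ι → E)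
    (W : ℝ) (hW : W = ∑ i ∈ X, w i) (hW0 : W ≠ 0)
    (μ : E) (hμ : μ = W⁻¹ • ∑ j ∈ X, w j • f j) :
    ∑ i ∈ X, ∑ j ∈ X, w i * w j * ‖f i - f j‖ ^ 2
      = 2 * W * ∑ i ∈ X, w i * ‖f i - μ‖ ^ 2 := by
  have hzero : ∑ i ∈ X, w i • (f i - μ) = 0 := by
    rw [hμ]; exact aux_center_zero X w f W hW hW0
  have hexp : ∀ i ∈ X, ∀ j ∈ X, w i * w j * ‖f i - f j‖ ^ 2
      = w i * w j * ‖f i - μ‖ ^ 2 + w i * w j * ‖f j - μ‖ ^ 2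
        - 2 * ((w i) * (w j) * inner ℝ (f i - μ) (f j - μ)) := by
    intro i _ j _
    have h : f i - f j = (f i - μ) - (f j - μ) := by abel
    rw [h, @norm_sub_sq_real]; ring
  have hcross : ∑ i ∈ X, ∑ j ∈ X, w i * w j * inner ℝ (f i - μ) (f j - μ) = (0 : ℝ) := by
    calc ∑ i ∈ X, ∑ j ∈ X, w i * w j * inner ℝ (f i - μ) (f j - μ)
        = ∑ j ∈ X, w j * inner ℝ (∑ i ∈ X, w i • (f i - μ)) (f j - μ) := by
          rw [Finset.sum_comm]
          refine Finset.sum_congr rfl fun j _ => ?_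
          rw [sum_inner, Finset.mul_sum]
          refine Finset.sum_congr rfl fun i _ => ?_
          rw [real_inner_smul_left]; ring
      _ = 0 := by rw [hzero]; simp
  have e1 : ∑ i ∈ X, ∑ j ∈ X, w i * w j * ‖f i - μ‖ ^ 2
      = W * ∑ i ∈ X, w i * ‖f i - μ‖ ^ 2 := by
    rw [Finset.mul_sum]
    refine Finset.sum_congr rfl fun i _ => ?_
    rw [hW, Finset.sum_mul]
    exact Finset.sum_congr rfl fun j _ => by ring
  have e2 : ∑ i ∈ X, ∑ j ∈ X, w i * w j * ‖f j - μ‖ ^ 2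
      = W * ∑ i ∈ X, w i * ‖f i - μ‖ ^ 2 := by
    rw [Finset.sum_comm, Finset.mul_sum]
    refine Finset.sum_congr rfl fun j _ => ?_
    rw [hW, Finset.sum_mul]
    exact Finset.sum_congr rfl fun i _ => by ring
  calc ∑ i ∈ X, ∑ j ∈ X, w i * w j * ‖f i - f j‖ ^ 2
      = ∑ i ∈ X, ∑ j ∈ X, (w i * w j * ‖f i - μ‖ ^ 2 + w i * w j * ‖f j - μ‖ ^ 2
          - 2 * ((w i) * (w j) * inner ℝ (f i - μ) (f j - μ))) :=
        Finset.sum_congr rfl fun i hi => Finset.sum_congr rfl fun j hj => hexp i hi j hj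
    _ = 2 * W * ∑ i ∈ X, w i * ‖f i - μ‖ ^ 2 := by
        simp only [Finset.sum_sub_distrib, Finset.sum_add_distrib, ← Finset.mul_sum]
        rw [e1, e2, hcross]
        ring

end Aux

theorem cost_preserved_under_biLipschitz {d m : ℕ}
    (X : Finset (EuclideanSpace ℝ (Fin d))) (w : EuclideanSpace ℝ (Fin d) → ℝ)
    (hw : ∀ x ∈ X, 0 < w x)
    (π : EuclideanSpace ℝ (Fin d) → EuclideanSpace ℝ (Fin m))
    (ε : ℝ) (hε : 0 < ε) (hε1 : ε < 1)
    (hπ : ∀ x ∈ X, ∀ y ∈ X,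
      (1 - ε) * ‖x - y‖ ≤ ‖π x - π y‖ ∧ ‖π x - π y‖ ≤ (1 + ε) * ‖x - y‖) :
    (⨅ c : EuclideanSpace ℝ (Fin m), ∑ x ∈ X, w x * ‖π x - c‖ ^ 2) ≤
      (1 + ε) ^ 2 * ⨅ c : EuclideanSpace ℝ (Fin d), ∑ x ∈ X, w x * ‖x - c‖ ^ 2 := by
  rcases X.eq_empty_or_nonempty with rfl | hne
  · simp [ciInf_const]
  set W : ℝ := ∑ x ∈ X, w x with hWdef
  have hW0 : 0 < W := Finset.sum_pos hw hne
  set μ : EuclideanSpace ℝ (Fin d) := W⁻¹ • ∑ x ∈ X, w x • x with hμ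
  set ν : EuclideanSpace ℝ (Fin m) := W⁻¹ • ∑ x ∈ X, w x • π x with hν
  have hbdd : ∀ {k : ℕ} (g : EuclideanSpace ℝ (Fin d) → EuclideanSpace ℝ (Fin k)),
      BddBelow (Set.range fun c : EuclideanSpace ℝ (Fin k) =>
        ∑ x ∈ X, w x * ‖g x - c‖ ^ 2) := by
    intro k g
    refine ⟨0, ?_⟩
    rintro _ ⟨c, rfl⟩
    exact Finset.sum_nonneg fun x hx => mul_nonneg (hw x hx).le (sq_nonneg _)
  -- the infimum for X equals the value at the centroid μ
  have hinf_d : (⨅ c : EuclideanSpace ℝ (Fin d), ∑ x ∈ X, w x * ‖x - c‖ ^ 2)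
      = ∑ x ∈ X, w x * ‖x - μ‖ ^ 2 := by
    refine le_antisymm (ciInf_le (hbdd id) μ) (le_ciInf fun c => ?_)
    have hk := aux_key1 X w id W hWdef hW0.ne' μ hμ c
    simp only [id] at hk
    rw [hk]
    have : 0 ≤ W * ‖μ - c‖ ^ 2 := mul_nonneg hW0.le (sq_nonneg _)
    linarith
  have h1 : (⨅ c : EuclideanSpace ℝ (Fin m), ∑ x ∈ X, w x * ‖π x - c‖ ^ 2)
      ≤ ∑ x ∈ X, w x * ‖π x - ν‖ ^ 2 := ciInf_le (hbdd π) ν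
  have h2 : 2 * W * ∑ x ∈ X, w x * ‖π x - ν‖ ^ 2
      ≤ (1 + ε) ^ 2 * (2 * W * ∑ x ∈ X, w x * ‖x - μ‖ ^ 2) := by
    have hk2 := aux_key2 X w id W hWdef hW0.ne' μ hμ
    simp only [id] at hk2
    rw [← aux_key2 X w π W hWdef hW0.ne' ν hν, ← hk2]
    rw [Finset.mul_sum]
    refine Finset.sum_le_sum fun x hx => ?_
    rw [Finset.mul_sum]
    refine Finset.sum_le_sum fun y hy => ?_
    have hnn : 0 ≤ w x * w y := mul_nonneg (hw x hx).le (hw y hy).le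
    have hsq : ‖π x - π y‖ ^ 2 ≤ ((1 + ε) * ‖x - y‖) ^ 2 :=
      pow_le_pow_left₀ (norm_nonneg _) (hπ x hx y hy).2 2
    calc w x * w y * ‖π x - π y‖ ^ 2 ≤ w x * w y * ((1 + ε) * ‖x - y‖) ^ 2 := by
          exact mul_le_mul_of_nonneg_left hsq hnn
      _ = (1 + ε) ^ 2 * (w x * w y * ‖x - y‖ ^ 2) := by ring
  have h3 : ∑ x ∈ X, w x * ‖π x - ν‖ ^ 2 ≤ (1 + ε) ^ 2 * ∑ x ∈ X, w x * ‖x - μ‖ ^ 2 := by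
    have h2W : 0 < 2 * W := by linarith
    nlinarith [h2]
  rw [hinf_d]
  exact h1.trans h3
end

section
/- Let M be a finite set of finitely supported probability measures on ℝ^d, fix p ≥ 1 and α ≥ 1, and let ν' be a probability measure such that (1/|M|)·Σ_{μ∈M} W_p(μ, ν')^p ≤ α · inf_ν (1/|M|)·Σ_{μ∈M} W_p(μ, ν)^p (infimum over measures ν supported on at most n points, with ν' itself such a measure). Define the sensitivity σ(μ) = sup_ν W_p(μ,ν)^p / ((1/|M|)·Σ_{μ'∈M} W_p(μ',ν)^p). Then for every μ ∈ M, σ(μ) ≤ α·2^(p-1)·W_p(μ,ν')^p / ((1/|M|)·Σ_{μ̃∈M} W_p(μ̃,ν')^p) + α·4^(p-1) + 4^(p-1). -/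
open MeasureTheory

/-- The `p`-Wasserstein distance with Euclidean (norm) ground cost, defined as the
infimum over couplings of the `p`-th root of the transport cost. -/
noncomputable def wassersteinDist {E : Type*} [NormedAddCommGroup E] [MeasurableSpace E]
    (p : ℝ) (μ ν : Measure E) : ℝ :=
  sInf {r : ℝ | ∃ γ : Measure (E × E), γ.map Prod.fst = μ ∧ γ.map Prod.snd = ν ∧
    r = (∫ z, ‖z.1 - z.2‖ ^ p ∂γ) ^ (1 / p)}

set_option linter.unusedSectionVars false
set_option linter.unusedVariables false
set_option maxHeartbeats 1000000

open ProbabilityTheory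

variable {E : Type*} [NormedAddCommGroup E] [MeasurableSpace E] [BorelSpace E]

lemma coupling_ae_mem {γ : Measure (E × E)} {μ ν : Measure E} {S T : Set E}
    (hS : MeasurableSet S) (hT : MeasurableSet T)
    (h1 : γ.map Prod.fst = μ) (h2 : γ.map Prod.snd = ν)
    (hμ : μ Sᶜ = 0) (hν : ν Tᶜ = 0) : ∀ᵐ z ∂γ, z.1 ∈ S ∧ z.2 ∈ T := by
  have hA : ∀ᵐ z : E × E ∂γ, z.1 ∈ S := by
    rw [ae_iff]
    have he : {z : E × E | ¬ z.1 ∈ S} = Prod.fst ⁻¹' Sᶜ := rfl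
    rw [he, ← Measure.map_apply measurable_fst hS.compl, h1]
    exact hμ
  have hB : ∀ᵐ z : E × E ∂γ, z.2 ∈ T := by
    rw [ae_iff]
    have he : {z : E × E | ¬ z.2 ∈ T} = Prod.snd ⁻¹' Tᶜ := rfl
    rw [he, ← Measure.map_apply measurable_snd hT.compl, h2]
    exact hν
  exact hA.and hB

lemma glue_couplings [PolishSpace E] [Nonempty E] {γ₁ γ₂ : Measure (E × E)}
    [IsProbabilityMeasure γ₁]
    [IsProbabilityMeasure γ₂] (h : γ₁.map Prod.snd = γ₂.map Prod.fst) :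
    ∃ m : Measure (E × E × E), IsProbabilityMeasure m ∧
      m.map (fun q => (q.1, q.2.1)) = γ₁ ∧ m.map Prod.snd = γ₂ := by
  set σ : Measure (E × E) := γ₁.map Prod.swap with hσ
  haveI : IsProbabilityMeasure σ := Measure.isProbabilityMeasure_map measurable_swap.aemeasurable
  haveI : IsProbabilityMeasure (γ₂.map Prod.fst) :=
    Measure.isProbabilityMeasure_map measurable_fst.aemeasurable
  set κ : Kernel E E := σ.condKernel with hκdef
  have hfst : σ.fst = γ₂.map Prod.fst := by
    rw [← h]
    show σ.map Prod.fst = γ₁.map Prod.snd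
    rw [hσ, Measure.map_map measurable_fst measurable_swap]
    rfl
  have hdis : (γ₂.map Prod.fst) ⊗ₘ κ = σ := by
    rw [← hfst]; exact σ.disintegrate κ
  set K : Kernel (E × E) E := κ.comap Prod.fst measurable_fst with hKdef
  set m' : Measure ((E × E) × E) := γ₂ ⊗ₘ K with hm'
  have hg : Measurable fun q : (E × E) × E => ((q.1.1 : E), (q.2 : E)) :=
    measurable_fst.fst.prodMk measurable_snd
  have key : m'.map (fun q => (q.1.1, q.2)) = (γ₂.map Prod.fst) ⊗ₘ κ := by
    ext s hs
    rw [Measure.map_apply hg hs, Measure.compProd_apply (hg hs), Measure.compProd_apply hs,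
      lintegral_map (Kernel.measurable_kernel_prodMk_left hs) measurable_fst]
    refine lintegral_congr fun a => ?_
    rw [hKdef, Kernel.comap_apply]
    rfl
  set f : (E × E) × E → E × E × E := fun q => (q.2, q.1.1, q.1.2) with hf
  have hfm : Measurable f := measurable_snd.prodMk (measurable_fst.fst.prodMk measurable_fst.snd)
  refine ⟨m'.map f, Measure.isProbabilityMeasure_map hfm.aemeasurable, ?_, ?_⟩
  · have h1 : Measurable fun q : E × E × E => ((q.1 : E), (q.2.1 : E)) :=
      measurable_fst.prodMk measurable_snd.fst
    rw [Measure.map_map h1 hfm]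
    have : ((fun q : E × E × E => ((q.1 : E), (q.2.1 : E))) ∘ f)
        = Prod.swap ∘ (fun q : (E × E) × E => ((q.1.1 : E), (q.2 : E))) := rfl
    rw [this, ← Measure.map_map measurable_swap hg, key, hdis, hσ,
      Measure.map_map measurable_swap measurable_swap]
    simp
  · rw [Measure.map_map measurable_snd hfm]
    have : (Prod.snd ∘ f) = (Prod.fst : (E × E) × E → E × E) := by
      funext q; exact Prod.mk.eta
    rw [this]
    show m'.fst = γ₂
    exact Measure.fst_compProd γ₂ K

lemma minkowski_aux {X : Type*} [MeasurableSpace X] (m : Measure X) [IsFiniteMeasure m]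
    {p : ℝ} (hp : 1 ≤ p)
    {f g h : X → ℝ} (hf : Measurable f) (hg : Measurable g) (hh : Measurable h)
    (hfn : ∀ x, 0 ≤ f x) (hgn : ∀ x, 0 ≤ g x) (hhn : ∀ x, 0 ≤ h x)
    (hle : ∀ x, h x ≤ f x + g x) (C : ℝ)
    (hbf : ∀ᵐ x ∂m, f x ≤ C) (hbg : ∀ᵐ x ∂m, g x ≤ C) (hbh : ∀ᵐ x ∂m, h x ≤ C) :
    (∫ x, h x ^ p ∂m) ^ (1 / p) ≤ (∫ x, f x ^ p ∂m) ^ (1 / p) + (∫ x, g x ^ p ∂m) ^ (1 / p) := by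
  have hp0 : (0 : ℝ) < p := lt_of_lt_of_le one_pos hp
  set P : ENNReal := ENNReal.ofReal p with hPdef
  have hP0 : P ≠ 0 := by simp [hPdef, ENNReal.ofReal_eq_zero]; linarith
  have hPt : P ≠ ⊤ := ENNReal.ofReal_ne_top
  have hPr : P.toReal = p := ENNReal.toReal_ofReal hp0.le
  have hmf : MemLp f P m := MemLp.of_bound hf.aestronglyMeasurable C
    (hbf.mono fun x hx => by rw [Real.norm_of_nonneg (hfn x)]; exact hx)
  have hmg : MemLp g P m := MemLp.of_bound hg.aestronglyMeasurable C
    (hbg.mono fun x hx => by rw [Real.norm_of_nonneg (hgn x)]; exact hx)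
  have hmh : MemLp h P m := MemLp.of_bound hh.aestronglyMeasurable C
    (hbh.mono fun x hx => by rw [Real.norm_of_nonneg (hhn x)]; exact hx)
  have htri : eLpNorm h P m ≤ eLpNorm f P m + eLpNorm g P m := by
    calc eLpNorm h P m ≤ eLpNorm (f + g) P m := by
          refine eLpNorm_mono fun x => ?_
          rw [Real.norm_of_nonneg (hhn x), Pi.add_apply,
            Real.norm_of_nonneg (add_nonneg (hfn x) (hgn x))]
          exact hle x
      _ ≤ eLpNorm f P m + eLpNorm g P m :=
          eLpNorm_add_le hf.aestronglyMeasurable hg.aestronglyMeasurable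
            (ENNReal.one_le_ofReal.2 hp)
  have ef : (∫ a, ‖f a‖ ^ P.toReal ∂m) = ∫ a, f a ^ p ∂m := by
    rw [hPr]
    exact integral_congr_ae (Filter.Eventually.of_forall fun a => by
      simp [Real.norm_of_nonneg (hfn a)])
  have eg : (∫ a, ‖g a‖ ^ P.toReal ∂m) = ∫ a, g a ^ p ∂m := by
    rw [hPr]
    exact integral_congr_ae (Filter.Eventually.of_forall fun a => by
      simp [Real.norm_of_nonneg (hgn a)])
  have eh : (∫ a, ‖h a‖ ^ P.toReal ∂m) = ∫ a, h a ^ p ∂m := by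
    rw [hPr]
    exact integral_congr_ae (Filter.Eventually.of_forall fun a => by
      simp [Real.norm_of_nonneg (hhn a)])
  rw [hmf.eLpNorm_eq_integral_rpow_norm hP0 hPt, hmg.eLpNorm_eq_integral_rpow_norm hP0 hPt,
    hmh.eLpNorm_eq_integral_rpow_norm hP0 hPt, ef, eg, eh, hPr] at htri
  have hAnn : 0 ≤ (∫ a, f a ^ p ∂m) ^ p⁻¹ :=
    Real.rpow_nonneg (integral_nonneg fun a => Real.rpow_nonneg (hfn a) p) _
  have hBnn : 0 ≤ (∫ a, g a ^ p ∂m) ^ p⁻¹ :=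
    Real.rpow_nonneg (integral_nonneg fun a => Real.rpow_nonneg (hgn a) p) _
  rw [← ENNReal.ofReal_add hAnn hBnn] at htri
  have := (ENNReal.ofReal_le_ofReal_iff (add_nonneg hAnn hBnn)).1 htri
  simpa [one_div] using this

lemma wassersteinDist_mem_nonneg {p : ℝ} {μ ν : Measure E} :
    BddBelow {r : ℝ | ∃ γ : Measure (E × E), γ.map Prod.fst = μ ∧ γ.map Prod.snd = ν ∧
      r = (∫ z, ‖z.1 - z.2‖ ^ p ∂γ) ^ (1 / p)} := by
  refine ⟨0, ?_⟩
  rintro r ⟨γ, -, -, rfl⟩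
  exact Real.rpow_nonneg (integral_nonneg fun z => Real.rpow_nonneg (norm_nonneg _) p) _

lemma wassersteinDist_nonneg (p : ℝ) (μ ν : Measure E) : 0 ≤ wassersteinDist p μ ν :=
  Real.sInf_nonneg fun _r ⟨_γ, _, _, hr⟩ => hr ▸
    Real.rpow_nonneg (integral_nonneg fun _z => Real.rpow_nonneg (norm_nonneg _) p) _

lemma wassersteinDist_comm [SecondCountableTopology E] (p : ℝ) (μ ν : Measure E) :
    wassersteinDist p μ ν = wassersteinDist p ν μ := by
  have hc : Measurable fun z : E × E => ‖z.1 - z.2‖ ^ p :=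
    ((measurable_fst.sub measurable_snd).norm).pow_const p
  have hsub : ∀ μ ν : Measure E,
      {r : ℝ | ∃ γ : Measure (E × E), γ.map Prod.fst = μ ∧ γ.map Prod.snd = ν ∧
        r = (∫ z, ‖z.1 - z.2‖ ^ p ∂γ) ^ (1 / p)} ⊆
      {r : ℝ | ∃ γ : Measure (E × E), γ.map Prod.fst = ν ∧ γ.map Prod.snd = μ ∧
        r = (∫ z, ‖z.1 - z.2‖ ^ p ∂γ) ^ (1 / p)} := by
    rintro μ ν r ⟨γ, h1, h2, rfl⟩
    refine ⟨γ.map Prod.swap, ?_, ?_, ?_⟩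
    · rw [Measure.map_map measurable_fst measurable_swap]; exact h2
    · rw [Measure.map_map measurable_snd measurable_swap]; exact h1
    · rw [integral_map measurable_swap.aemeasurable hc.aestronglyMeasurable]
      congr 1
      refine integral_congr_ae (Filter.Eventually.of_forall fun z => ?_)
      simp [norm_sub_rev]
  rw [wassersteinDist, wassersteinDist]
  exact congrArg sInf (Set.Subset.antisymm (hsub μ ν) (hsub ν μ))

lemma wassersteinDist_triangle [PolishSpace E] [Nonempty E] {p : ℝ} (hp : 1 ≤ p)
    (μ ν ρ : Measure E) [IsProbabilityMeasure μ] [IsProbabilityMeasure ν] [IsProbabilityMeasure ρ]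
    (hμ : ∃ s : Finset E, μ (↑s)ᶜ = 0) (hν : ∃ s : Finset E, ν (↑s)ᶜ = 0)
    (hρ : ∃ s : Finset E, ρ (↑s)ᶜ = 0) :
    wassersteinDist p μ ρ ≤ wassersteinDist p μ ν + wassersteinDist p ν ρ := by
  classical
  obtain ⟨s₁, hs₁⟩ := hμ
  obtain ⟨t, ht⟩ := hν
  obtain ⟨s₂, hs₂⟩ := hρ
  have hp0 : (0 : ℝ) < p := lt_of_lt_of_le one_pos hp
  have hc : Measurable fun z : E × E => ‖z.1 - z.2‖ ^ p :=
    ((measurable_fst.sub measurable_snd).norm).pow_const p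
  have key : ∀ r₁ ∈ {r : ℝ | ∃ γ : Measure (E × E), γ.map Prod.fst = μ ∧ γ.map Prod.snd = ν ∧
        r = (∫ z, ‖z.1 - z.2‖ ^ p ∂γ) ^ (1 / p)},
      ∀ r₂ ∈ {r : ℝ | ∃ γ : Measure (E × E), γ.map Prod.fst = ν ∧ γ.map Prod.snd = ρ ∧
        r = (∫ z, ‖z.1 - z.2‖ ^ p ∂γ) ^ (1 / p)},
      wassersteinDist p μ ρ ≤ r₁ + r₂ := by
    rintro r₁ ⟨γ₁, hγ₁f, hγ₁s, rfl⟩ r₂ ⟨γ₂, hγ₂f, hγ₂s, rfl⟩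
    haveI : IsProbabilityMeasure γ₁ := by
      constructor
      have h := congrArg (fun m : Measure E => m Set.univ) hγ₁f
      simpa [Measure.map_apply measurable_fst MeasurableSet.univ] using h
    haveI : IsProbabilityMeasure γ₂ := by
      constructor
      have h := congrArg (fun m : Measure E => m Set.univ) hγ₂f
      simpa [Measure.map_apply measurable_fst MeasurableSet.univ] using h
    obtain ⟨m, hmP, h12, h23⟩ := glue_couplings (γ₁ := γ₁) (γ₂ := γ₂) (by rw [hγ₁s, hγ₂f])
    haveI := hmP
    have hg12 : Measurable fun q : E × E × E => ((q.1 : E), (q.2.1 : E)) :=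
      measurable_fst.prodMk measurable_snd.fst
    have hg13 : Measurable fun q : E × E × E => ((q.1 : E), (q.2.2 : E)) :=
      measurable_fst.prodMk measurable_snd.snd
    -- marginals of the glued coupling
    have hγf : (m.map fun q : E × E × E => ((q.1 : E), (q.2.2 : E))).map Prod.fst = μ := by
      rw [Measure.map_map measurable_fst hg13]
      have h' : (Prod.fst ∘ fun q : E × E × E => ((q.1 : E), (q.2.2 : E)))
          = Prod.fst ∘ (fun q : E × E × E => ((q.1 : E), (q.2.1 : E))) := rfl
      rw [h', ← Measure.map_map measurable_fst hg12, h12, hγ₁f]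
    have hγs : (m.map fun q : E × E × E => ((q.1 : E), (q.2.2 : E))).map Prod.snd = ρ := by
      rw [Measure.map_map measurable_snd hg13]
      have h' : (Prod.snd ∘ fun q : E × E × E => ((q.1 : E), (q.2.2 : E)))
          = Prod.snd ∘ (Prod.snd : E × E × E → E × E) := rfl
      rw [h', ← Measure.map_map measurable_snd measurable_snd, h23, hγ₂s]
    have hWle : wassersteinDist p μ ρ ≤
        (∫ z, ‖z.1 - z.2‖ ^ p ∂(m.map fun q : E × E × E => ((q.1 : E), (q.2.2 : E)))) ^ (1 / p) :=
      csInf_le wassersteinDist_mem_nonneg ⟨_, hγf, hγs, rfl⟩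
    -- rewrite the three integrals over m
    have e₁ : (∫ z, ‖z.1 - z.2‖ ^ p ∂γ₁) = ∫ q, ‖q.1 - q.2.1‖ ^ p ∂m := by
      rw [← h12, integral_map hg12.aemeasurable hc.aestronglyMeasurable]
    have e₂ : (∫ z, ‖z.1 - z.2‖ ^ p ∂γ₂) = ∫ q, ‖q.2.1 - q.2.2‖ ^ p ∂m := by
      rw [← h23, integral_map measurable_snd.aemeasurable hc.aestronglyMeasurable]
    have e₃ : (∫ z, ‖z.1 - z.2‖ ^ p ∂(m.map fun q : E × E × E => ((q.1 : E), (q.2.2 : E))))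
        = ∫ q, ‖q.1 - q.2.2‖ ^ p ∂m := by
      rw [integral_map hg13.aemeasurable hc.aestronglyMeasurable]
    -- a.e. support bounds
    have hae₁ : ∀ᵐ q : E × E × E ∂m, q.1 ∈ (↑s₁ : Set E) ∧ q.2.1 ∈ (↑t : Set E) := by
      have h := coupling_ae_mem (γ := γ₁) s₁.measurableSet t.measurableSet hγ₁f hγ₁s hs₁ ht
      rw [← h12] at h
      exact (ae_map_iff hg12.aemeasurable
        (s₁.measurableSet.prod t.measurableSet : MeasurableSet
          {z : E × E | z.1 ∈ (↑s₁ : Set E) ∧ z.2 ∈ (↑t : Set E)})).1 h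
    have hae₂ : ∀ᵐ q : E × E × E ∂m, q.2.1 ∈ (↑t : Set E) ∧ q.2.2 ∈ (↑s₂ : Set E) := by
      have h := coupling_ae_mem (γ := γ₂) t.measurableSet s₂.measurableSet hγ₂f hγ₂s ht hs₂
      rw [← h23] at h
      exact (ae_map_iff measurable_snd.aemeasurable
        (t.measurableSet.prod s₂.measurableSet : MeasurableSet
          {z : E × E | z.1 ∈ (↑t : Set E) ∧ z.2 ∈ (↑s₂ : Set E)})).1 h
    -- a uniform bound on the relevant norms
    set u : Finset E := (s₁ ∪ t) ∪ s₂ with hu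
    obtain ⟨C₀, hC₀⟩ := (u.finite_toSet.image fun x : E => ‖x‖).bddAbove
    have hbound : ∀ x ∈ u, ‖x‖ ≤ C₀ := fun x hx => hC₀ ⟨x, by simpa using hx, rfl⟩
    have hmem : ∀ᵐ q : E × E × E ∂m, q.1 ∈ u ∧ q.2.1 ∈ u ∧ q.2.2 ∈ u := by
      filter_upwards [hae₁, hae₂] with q h₁ h₂
      refine ⟨?_, ?_, ?_⟩
      · simp only [hu, Finset.mem_union]; exact Or.inl (Or.inl (by simpa using h₁.1))
      · simp only [hu, Finset.mem_union]; exact Or.inl (Or.inr (by simpa using h₁.2))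
      · simp only [hu, Finset.mem_union]; exact Or.inr (by simpa using h₂.2)
    have hminq := minkowski_aux m hp
      (f := fun q : E × E × E => ‖q.1 - q.2.1‖) (g := fun q => ‖q.2.1 - q.2.2‖)
      (h := fun q => ‖q.1 - q.2.2‖)
      ((measurable_fst.sub measurable_snd.fst).norm)
      ((measurable_snd.fst.sub measurable_snd.snd).norm)
      ((measurable_fst.sub measurable_snd.snd).norm)
      (fun q => norm_nonneg _) (fun q => norm_nonneg _) (fun q => norm_nonneg _)
      (fun q => by simpa [dist_eq_norm] using dist_triangle q.1 q.2.1 q.2.2)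
      (C₀ + C₀)
      (hmem.mono fun q hq => le_trans (norm_sub_le _ _)
        (add_le_add (hbound _ hq.1) (hbound _ hq.2.1)))
      (hmem.mono fun q hq => le_trans (norm_sub_le _ _)
        (add_le_add (hbound _ hq.2.1) (hbound _ hq.2.2)))
      (hmem.mono fun q hq => le_trans (norm_sub_le _ _)
        (add_le_add (hbound _ hq.1) (hbound _ hq.2.2)))
    rw [e₃] at hWle
    rw [e₁, e₂]
    exact le_trans hWle hminq
  -- combine
  have hne₂ : {r : ℝ | ∃ γ : Measure (E × E), γ.map Prod.fst = ν ∧ γ.map Prod.snd = ρ ∧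
      r = (∫ z, ‖z.1 - z.2‖ ^ p ∂γ) ^ (1 / p)}.Nonempty :=
    ⟨_, ν.prod ρ, Measure.fst_prod, Measure.snd_prod, rfl⟩
  have hne₁ : {r : ℝ | ∃ γ : Measure (E × E), γ.map Prod.fst = μ ∧ γ.map Prod.snd = ν ∧
      r = (∫ z, ‖z.1 - z.2‖ ^ p ∂γ) ^ (1 / p)}.Nonempty :=
    ⟨_, μ.prod ν, Measure.fst_prod, Measure.snd_prod, rfl⟩
  have h1 : wassersteinDist p μ ρ - wassersteinDist p ν ρ ≤ wassersteinDist p μ ν := by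
    refine le_csInf hne₁ fun r₁ hr₁ => ?_
    have h2 : wassersteinDist p μ ρ - r₁ ≤ wassersteinDist p ν ρ := by
      refine le_csInf hne₂ fun r₂ hr₂ => ?_
      have := key r₁ hr₁ r₂ hr₂
      linarith
    linarith
  linarith

lemma two_rpow_bound {p : ℝ} (hp : 1 ≤ p) {a b : ℝ} (ha : 0 ≤ a) (hb : 0 ≤ b) :
    (a + b) ^ p ≤ 2 ^ (p - 1) * (a ^ p + b ^ p) := by
  lift a to NNReal using ha
  lift b to NNReal using hb
  exact_mod_cast NNReal.rpow_add_le_mul_rpow_add_rpow a b hp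

theorem sensitivity_bound {d k n : ℕ} (hk : 0 < k) (p α : ℝ) (hp : 1 ≤ p) (hα : 1 ≤ α)
    (μs : Fin k → Measure (EuclideanSpace ℝ (Fin d)))
    (hprob : ∀ i, IsProbabilityMeasure (μs i))
    (hfin : ∀ i, ∃ s : Finset (EuclideanSpace ℝ (Fin d)), μs i (↑s)ᶜ = 0)
    (ν' : Measure (EuclideanSpace ℝ (Fin d))) [IsProbabilityMeasure ν']
    (hν' : ∃ t : Finset (EuclideanSpace ℝ (Fin d)), t.card ≤ n ∧ ν' (↑t)ᶜ = 0)
    (happrox : ∀ ν : Measure (EuclideanSpace ℝ (Fin d)), IsProbabilityMeasure ν →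
      (∃ t : Finset (EuclideanSpace ℝ (Fin d)), t.card ≤ n ∧ ν (↑t)ᶜ = 0) →
      (1 / (k : ℝ)) * ∑ i, wassersteinDist p (μs i) ν' ^ p ≤
        α * ((1 / (k : ℝ)) * ∑ i, wassersteinDist p (μs i) ν ^ p))
    (hden' : 0 < (1 / (k : ℝ)) * ∑ i, wassersteinDist p (μs i) ν' ^ p) :
    ∀ (j : Fin k) (ν : Measure (EuclideanSpace ℝ (Fin d))), IsProbabilityMeasure ν →
      (∃ t : Finset (EuclideanSpace ℝ (Fin d)), t.card ≤ n ∧ ν (↑t)ᶜ = 0) →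
      0 < (1 / (k : ℝ)) * ∑ i, wassersteinDist p (μs i) ν ^ p →
      wassersteinDist p (μs j) ν ^ p / ((1 / (k : ℝ)) * ∑ i, wassersteinDist p (μs i) ν ^ p) ≤
        α * 2 ^ (p - 1) *
            (wassersteinDist p (μs j) ν' ^ p /
              ((1 / (k : ℝ)) * ∑ i, wassersteinDist p (μs i) ν' ^ p)) +
          α * 4 ^ (p - 1) + 4 ^ (p - 1) := by
  intro j ν hνP hνfin hden
  haveI := hνP
  have hk' : (0 : ℝ) < k := by exact_mod_cast hk
  have hp0 : (0 : ℝ) ≤ p := by linarith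
  have h2p : (0 : ℝ) ≤ 2 ^ (p - 1) := Real.rpow_nonneg (by norm_num) _
  have h4p : (0 : ℝ) ≤ 4 ^ (p - 1) := Real.rpow_nonneg (by norm_num) _
  have hA'A := happrox ν hνP hνfin
  have hν'fin : ∃ s : Finset (EuclideanSpace ℝ (Fin d)), ν' (↑s)ᶜ = 0 :=
    ⟨hν'.choose, hν'.choose_spec.2⟩
  have hνfin' : ∃ s : Finset (EuclideanSpace ℝ (Fin d)), ν (↑s)ᶜ = 0 :=
    ⟨hνfin.choose, hνfin.choose_spec.2⟩
  have hWnn : ∀ μ₁ μ₂ : Measure (EuclideanSpace ℝ (Fin d)), 0 ≤ wassersteinDist p μ₁ μ₂ :=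
    fun μ₁ μ₂ => wassersteinDist_nonneg p μ₁ μ₂
  have tri1 : wassersteinDist p (μs j) ν ≤
      wassersteinDist p (μs j) ν' + wassersteinDist p ν' ν := by
    haveI := hprob j
    exact wassersteinDist_triangle hp (μs j) ν' ν (hfin j) hν'fin hνfin'
  have hWjp : wassersteinDist p (μs j) ν ^ p ≤
      2 ^ (p - 1) * (wassersteinDist p (μs j) ν' ^ p + wassersteinDist p ν' ν ^ p) :=
    le_trans (Real.rpow_le_rpow (hWnn _ _) tri1 hp0)
      (two_rpow_bound hp (hWnn _ _) (hWnn _ _))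
  have hBp : ∀ i, wassersteinDist p ν' ν ^ p ≤
      2 ^ (p - 1) * (wassersteinDist p (μs i) ν' ^ p + wassersteinDist p (μs i) ν ^ p) := by
    intro i
    haveI := hprob i
    have tri2 := wassersteinDist_triangle hp ν' (μs i) ν hν'fin (hfin i) hνfin'
    rw [wassersteinDist_comm p ν' (μs i)] at tri2
    exact le_trans (Real.rpow_le_rpow (hWnn _ _) tri2 hp0)
      (two_rpow_bound hp (hWnn _ _) (hWnn _ _))
  have hsum : (k : ℝ) * wassersteinDist p ν' ν ^ p ≤
      2 ^ (p - 1) * ((∑ i, wassersteinDist p (μs i) ν' ^ p)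
        + ∑ i, wassersteinDist p (μs i) ν ^ p) := by
    calc (k : ℝ) * wassersteinDist p ν' ν ^ p
        = ∑ _i : Fin k, wassersteinDist p ν' ν ^ p := by
          simp [Finset.sum_const, Finset.card_univ, nsmul_eq_mul]
      _ ≤ ∑ i, 2 ^ (p - 1) * (wassersteinDist p (μs i) ν' ^ p
            + wassersteinDist p (μs i) ν ^ p) := Finset.sum_le_sum fun i _ => hBp i
      _ = _ := by rw [← Finset.mul_sum, Finset.sum_add_distrib]
  have hBavg : wassersteinDist p ν' ν ^ p ≤
      2 ^ (p - 1) * ((1 / (k : ℝ)) * ∑ i, wassersteinDist p (μs i) ν' ^ p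
        + (1 / (k : ℝ)) * ∑ i, wassersteinDist p (μs i) ν ^ p) := by
    have h2 : wassersteinDist p ν' ν ^ p ≤
        (2 ^ (p - 1) * ((∑ i, wassersteinDist p (μs i) ν' ^ p)
          + ∑ i, wassersteinDist p (μs i) ν ^ p)) / k := by
      rw [le_div_iff₀ hk', mul_comm]
      exact hsum
    have h3 : (2 ^ (p - 1) * ((∑ i, wassersteinDist p (μs i) ν' ^ p)
          + ∑ i, wassersteinDist p (μs i) ν ^ p)) / k
        = 2 ^ (p - 1) * ((1 / (k : ℝ)) * ∑ i, wassersteinDist p (μs i) ν' ^ p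
          + (1 / (k : ℝ)) * ∑ i, wassersteinDist p (μs i) ν ^ p) := by
      field_simp
    rw [h3] at h2
    exact h2
  set T : ℝ := wassersteinDist p (μs j) ν' ^ p /
      ((1 / (k : ℝ)) * ∑ i, wassersteinDist p (μs i) ν' ^ p) with hTdef
  have hTnn : 0 ≤ T := div_nonneg (Real.rpow_nonneg (hWnn _ _) p) hden'.le
  have hWj' : wassersteinDist p (μs j) ν' ^ p
      = T * ((1 / (k : ℝ)) * ∑ i, wassersteinDist p (μs i) ν' ^ p) := by
    rw [hTdef, div_mul_cancel₀ _ hden'.ne']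
  have e1 : 2 ^ (p - 1) * wassersteinDist p (μs j) ν' ^ p ≤
      α * 2 ^ (p - 1) * T * ((1 / (k : ℝ)) * ∑ i, wassersteinDist p (μs i) ν ^ p) := by
    calc 2 ^ (p - 1) * wassersteinDist p (μs j) ν' ^ p
        = 2 ^ (p - 1) * (T * ((1 / (k : ℝ)) * ∑ i, wassersteinDist p (μs i) ν' ^ p)) := by
          rw [← hWj']
      _ ≤ 2 ^ (p - 1) * (T * (α * ((1 / (k : ℝ)) * ∑ i, wassersteinDist p (μs i) ν ^ p))) :=
          mul_le_mul_of_nonneg_left (mul_le_mul_of_nonneg_left hA'A hTnn) h2p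
      _ = α * 2 ^ (p - 1) * T * ((1 / (k : ℝ)) * ∑ i, wassersteinDist p (μs i) ν ^ p) := by
          ring
  have e4 : (2 : ℝ) ^ (p - 1) * 2 ^ (p - 1) = 4 ^ (p - 1) := by
    rw [← Real.mul_rpow (by norm_num) (by norm_num)]
    norm_num
  have e3 : 2 ^ (p - 1) * wassersteinDist p ν' ν ^ p ≤
      4 ^ (p - 1) * ((1 / (k : ℝ)) * ∑ i, wassersteinDist p (μs i) ν' ^ p)
        + 4 ^ (p - 1) * ((1 / (k : ℝ)) * ∑ i, wassersteinDist p (μs i) ν ^ p) := by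
    calc 2 ^ (p - 1) * wassersteinDist p ν' ν ^ p
        ≤ 2 ^ (p - 1) * (2 ^ (p - 1) * ((1 / (k : ℝ)) * ∑ i, wassersteinDist p (μs i) ν' ^ p
            + (1 / (k : ℝ)) * ∑ i, wassersteinDist p (μs i) ν ^ p)) :=
          mul_le_mul_of_nonneg_left hBavg h2p
      _ = _ := by rw [← e4]; ring
  have e5 : 4 ^ (p - 1) * ((1 / (k : ℝ)) * ∑ i, wassersteinDist p (μs i) ν' ^ p)
      ≤ 4 ^ (p - 1) * (α * ((1 / (k : ℝ)) * ∑ i, wassersteinDist p (μs i) ν ^ p)) :=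
    mul_le_mul_of_nonneg_left hA'A h4p
  rw [div_le_iff₀ hden]
  linarith [hWjp, e1, e3, e5]
end
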